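/- Every rooted tree A with branching number br(A) = m admits a path decomposition V_1, …, V_n in which every bag has size at most m + 2, every intersection of consecutive bags has size at most m + 1, and the root of A belongs to the last bag V_n. -/

import Mathlib

/-- A rooted tree, encoded as a finite prefix-closed set of finite sequences of
natural numbers containing the root `[]`; `v ++ [i]` is a child of `v`. -/
def IsTreeSet (T : Finset (List ℕ)) : Prop :=
  [] ∈ T ∧ ∀ (v : List ℕ) (i : ℕ), v ++ [i] ∈ T → v ∈ T

/-- Every node of `T` has at most `d` children (out-degree at most `d`). -/
def DegLE (T : Finset (List ℕ)) (d : ℕ) : Prop :=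
  ∀ v ∈ T, { i : ℕ | v ++ [i] ∈ T }.ncard ≤ d

/-- Every node of `T` has depth at most `n`. -/
def DepthLE (T : Finset (List ℕ)) (n : ℕ) : Prop :=
  ∀ v ∈ T, v.length ≤ n

/-- `v` is a leaf of `T`. -/
def IsLeaf (T : Finset (List ℕ)) (v : List ℕ) : Prop :=
  v ∈ T ∧ ∀ i : ℕ, v ++ [i] ∉ T

/-- The number of leaves of `T`. -/
noncomputable def leafCount (T : Finset (List ℕ)) : ℕ :=
  { v : List ℕ | IsLeaf T v }.ncard

/-- `T` contains the full binary tree of depth `m` as a minor: there is a map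
`f` from binary strings of length at most `m` into `T` sending children to
proper descendants, such that the images of the two children of a node are
incomparable. -/
def HasFBTMinor (T : Finset (List ℕ)) (m : ℕ) : Prop :=
  ∃ f : List (Fin 2) → List ℕ,
    (∀ v : List (Fin 2), v.length ≤ m → f v ∈ T) ∧
    (∀ (v : List (Fin 2)) (j : Fin 2), v.length < m →
        f v <+: f (v ++ [j]) ∧ f v ≠ f (v ++ [j])) ∧
    (∀ v : List (Fin 2), v.length < m →
        ¬ f (v ++ [0]) <+: f (v ++ [1]) ∧ ¬ f (v ++ [1]) <+: f (v ++ [0]))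

/-- `br` is a branching-number labelling of the tree `T`: leaves get `0`; an
inner node whose children's maximum branching number is `M` gets `M + 1` if at
least two children attain `M`, and `M` otherwise. -/
def IsBranchingLabelling (T : Finset (List ℕ)) (br : List ℕ → ℕ) : Prop :=
  (∀ v ∈ T, (∀ i : ℕ, v ++ [i] ∉ T) → br v = 0) ∧
  (∀ v ∈ T, (∃ i : ℕ, v ++ [i] ∈ T) →
    ∃ M : ℕ,
      (∀ i : ℕ, v ++ [i] ∈ T → br (v ++ [i]) ≤ M) ∧
      (∃ i : ℕ, v ++ [i] ∈ T ∧ br (v ++ [i]) = M) ∧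
      ((2 ≤ { i : ℕ | v ++ [i] ∈ T ∧ br (v ++ [i]) = M }.ncard ∧ br v = M + 1) ∨
       ({ i : ℕ | v ++ [i] ∈ T ∧ br (v ++ [i]) = M }.ncard ≤ 1 ∧ br v = M)))

namespace PDProof

/-- union-of-bags membership -/
def InBags (L : List (Finset (List ℕ))) (v : List ℕ) : Prop := ∃ B ∈ L, v ∈ B

/-- interval (contiguity) property of a bag list -/
def Interval (L : List (Finset (List ℕ))) : Prop :=
  ∀ (i j k : ℕ) (hi : i < L.length) (hj : j < L.length) (hk : k < L.length),
    i ≤ j → j ≤ k → ∀ v, v ∈ L[i] → v ∈ L[k] → v ∈ L[j]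

/-- consecutive-intersection bound -/
def Joints (m : ℕ) (L : List (Finset (List ℕ))) : Prop :=
  ∀ (i : ℕ) (h : i + 1 < L.length), (L[i]'(by omega) ∩ L[i+1]).card ≤ m + 1

lemma interval_singleton (B : Finset (List ℕ)) : Interval [B] := by
  intro i j k hi hj hk _ _ v h1 h2
  simp only [List.length_singleton] at hj
  interval_cases j <;> simpa using h1

lemma joints_singleton (m : ℕ) (B : Finset (List ℕ)) : Joints m [B] := by
  intro i h; simp at h

lemma glue (L₁ L₂ : List (Finset (List ℕ))) (h₁ : L₁ ≠ []) (h₂ : L₂ ≠ [])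
    (m : ℕ) (s : List ℕ)
    (int₁ : Interval L₁) (int₂ : Interval L₂)
    (j₁ : Joints m L₁) (j₂ : Joints m L₂)
    (cross : ∀ v, InBags L₁ v → InBags L₂ v → v = s)
    (hs₁ : s ∈ L₁.getLast h₁) (hs₂ : s ∈ L₂.head h₂) :
    Interval (L₁ ++ L₂) ∧ Joints m (L₁ ++ L₂) := by
  have hl₁ : 0 < L₁.length := List.length_pos_iff.mpr h₁
  have hl₂ : 0 < L₂.length := List.length_pos_iff.mpr h₂
  have hlast : L₁.getLast h₁ = L₁[L₁.length - 1]'(by omega) := List.getLast_eq_getElem h₁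
  have hhead : L₂.head h₂ = L₂[0]'hl₂ := List.head_eq_getElem h₂
  have hget₁ : ∀ (i : ℕ) (h : i < L₁.length), (L₁ ++ L₂)[i]'(by simp; omega) = L₁[i] := by
    intro i h; rw [List.getElem_append_left]
  have hget₂ : ∀ (i : ℕ) (h : L₁.length ≤ i) (h' : i < L₁.length + L₂.length),
      (L₁ ++ L₂)[i]'(by simp; omega) = L₂[i - L₁.length]'(by omega) := by
    intro i h h'; rw [List.getElem_append_right] ; omega
  constructor
  · intro i j k hi hj hk hij hjk v hvi hvk
    simp only [List.length_append] at hi hj hk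
    by_cases hkl : k < L₁.length
    · rw [hget₁ k hkl] at hvk
      rw [hget₁ i (by omega)] at hvi
      rw [hget₁ j (by omega)]
      exact int₁ i j k (by omega) (by omega) hkl hij hjk v hvi hvk
    · by_cases hil : i < L₁.length
      · rw [hget₁ i hil] at hvi
        rw [hget₂ k (by omega) (by omega)] at hvk
        have hv : v = s := cross v ⟨_, List.getElem_mem _, hvi⟩ ⟨_, List.getElem_mem _, hvk⟩
        by_cases hjl : j < L₁.length
        · rw [hget₁ j hjl]
          refine int₁ i j (L₁.length - 1) hil hjl (by omega) hij (by omega) v hvi ?_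
          rw [← hlast, hv]; exact hs₁
        · rw [hget₂ j (by omega) (by omega)]
          refine int₂ 0 (j - L₁.length) (k - L₁.length) hl₂ (by omega) (by omega)
            (by omega) (by omega) v ?_ hvk
          rw [← hhead, hv]; exact hs₂
      · rw [hget₂ i (by omega) (by omega)] at hvi
        rw [hget₂ k (by omega) (by omega)] at hvk
        rw [hget₂ j (by omega) (by omega)]
        exact int₂ _ _ _ (by omega) (by omega) (by omega) (by omega) (by omega) v hvi hvk
  · intro i h
    simp only [List.length_append] at h
    by_cases h1 : i + 1 < L₁.length
    · rw [hget₁ i (by omega), hget₁ (i+1) h1]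
      exact j₁ i h1
    · by_cases h2 : i + 1 = L₁.length
      · rw [hget₁ i (by omega), hget₂ (i+1) (by omega) (by omega)]
        have : (L₁[i]'(by omega) ∩ (L₂[i + 1 - L₁.length]'(by omega))) ⊆ {s} := by
          intro v hv
          simp only [Finset.mem_inter] at hv
          simp only [Finset.mem_singleton]
          exact cross v ⟨_, List.getElem_mem _, hv.1⟩ ⟨_, List.getElem_mem _, hv.2⟩
        calc _ ≤ ({s} : Finset (List ℕ)).card := Finset.card_le_card this
          _ ≤ m + 1 := by simp
      · rw [hget₂ i (by omega) (by omega), hget₂ (i+1) (by omega) (by omega)]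
        have e : i + 1 - L₁.length = (i - L₁.length) + 1 := by omega
        have e2 : (L₂[i+1-L₁.length]'(by omega)) = (L₂[(i-L₁.length)+1]'(by omega)) := by congr 1
        rw [e2]
        exact j₂ (i - L₁.length) (by omega)

lemma interval_map (L₀ : List (Finset (List ℕ))) (g : Finset (List ℕ) → Finset (List ℕ))
    (hg : ∀ v : List ℕ, (∀ B, v ∈ g B) ∨ (∀ B, v ∉ g B) ∨ ∃ w, ∀ B, (v ∈ g B ↔ w ∈ B))
    (h : Interval L₀) : Interval (L₀.map g) := by
  intro i j k hi hj hk hij hjk v hvi hvk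
  simp only [List.length_map] at hi hj hk
  rw [List.getElem_map] at hvi hvk ⊢
  rcases hg v with hv | hv | ⟨w, hv⟩
  · exact hv _
  · exact absurd hvi (hv _)
  · rw [hv] at hvi hvk ⊢
    exact h i j k hi hj hk hij hjk w hvi hvk

/-- path decomposition as a list of bags, with parameter bound `m` -/
def PD (T : Finset (List ℕ)) (m : ℕ) (L : List (Finset (List ℕ))) : Prop :=
  L ≠ [] ∧
  (∀ B ∈ L, ∀ v ∈ B, v ∈ T) ∧
  (∀ v ∈ T, ∃ B ∈ L, v ∈ B) ∧
  (∀ (v : List ℕ) (j : ℕ), v ++ [j] ∈ T → ∃ B ∈ L, v ∈ B ∧ v ++ [j] ∈ B) ∧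
  Interval L ∧
  (∀ B ∈ L, B.card ≤ m + 2) ∧
  Joints m L ∧
  (∀ h : L ≠ [], [] ∈ L.getLast h)

lemma PD.mono {T m m' L} (h : PD T m L) (hm : m ≤ m') : PD T m' L := by
  obtain ⟨h1, h2, h3, h4, h5, h6, h7, h8⟩ := h
  refine ⟨h1, h2, h3, h4, h5, fun B hB => le_trans (h6 B hB) (by omega), fun i hi => le_trans (h7 i hi) (by omega), h8⟩

/-- subtree rooted at child `i` of the root -/
def sub (T : Finset (List ℕ)) (i : ℕ) : Finset (List ℕ) :=
  (T.filter (fun v => v.head? = some i)).image List.tail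

lemma mem_sub {T : Finset (List ℕ)} {i : ℕ} {w : List ℕ} :
    w ∈ sub T i ↔ i :: w ∈ T := by
  constructor
  · rintro hw
    simp only [sub, Finset.mem_image, Finset.mem_filter] at hw
    obtain ⟨v, ⟨hv, hh⟩, ht⟩ := hw
    cases v with
    | nil => simp at hh
    | cons a t =>
      simp only [List.head?_cons, Option.some.injEq] at hh
      simp only [List.tail_cons] at ht
      subst hh ht; exact hv
  · intro h
    simp only [sub, Finset.mem_image, Finset.mem_filter]
    exact ⟨i :: w, ⟨h, rfl⟩, rfl⟩

lemma sub_card {T : Finset (List ℕ)} (hroot : [] ∈ T) (i : ℕ) :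
    (sub T i).card < T.card := by
  have h1 : (sub T i).card ≤ (T.filter (fun v => v.head? = some i)).card :=
    Finset.card_image_le
  have h2 : (T.filter (fun v => v.head? = some i)) ⊆ T.erase [] := by
    intro v hv
    simp only [Finset.mem_filter] at hv
    refine Finset.mem_erase.mpr ⟨?_, hv.1⟩
    rintro rfl; simp at hv
  have h3 := Finset.card_le_card h2
  have h4 : (T.erase []).card < T.card := Finset.card_erase_lt_of_mem hroot
  omega

lemma sub_tree {T : Finset (List ℕ)} (hT : IsTreeSet T) {i : ℕ} (hi : [i] ∈ T) :
    IsTreeSet (sub T i) := by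
  constructor
  · rw [mem_sub]; exact hi
  · intro v j hv
    rw [mem_sub] at hv ⊢
    rw [← List.cons_append] at hv
    exact hT.2 _ _ hv

lemma sub_br {T : Finset (List ℕ)} {br : List ℕ → ℕ} (hbr : IsBranchingLabelling T br)
    (i : ℕ) : IsBranchingLabelling (sub T i) (fun w => br (i :: w)) := by
  constructor
  · intro v hv hleaf
    refine hbr.1 (i :: v) (mem_sub.mp hv) (fun j hj => ?_)
    exact hleaf j (mem_sub.mpr hj)
  · intro v hv ⟨j, hj⟩
    obtain ⟨M, hM1, hM2, hM3⟩ := hbr.2 (i :: v) (mem_sub.mp hv) ⟨j, mem_sub.mp hj⟩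
    refine ⟨M, ?_, ?_, ?_⟩
    · intro k hk
      exact hM1 k (mem_sub.mp hk)
    · obtain ⟨k, hk1, hk2⟩ := hM2
      exact ⟨k, mem_sub.mpr hk1, hk2⟩
    · have hset : { k : ℕ | v ++ [k] ∈ sub T i ∧ br (i :: (v ++ [k])) = M } =
          { k : ℕ | (i :: v) ++ [k] ∈ T ∧ br ((i :: v) ++ [k]) = M } := by
        ext k
        simp only [Set.mem_setOf_eq, mem_sub, List.cons_append]
      simpa [hset] using hM3

lemma mem_take {T : Finset (List ℕ)} (hT : IsTreeSet T) :
    ∀ v ∈ T, ∀ k, v.take k ∈ T := by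
  intro v
  induction v using List.reverseRecOn with
  | nil => intro hv k; simpa using hv
  | append_singleton w a ih =>
    intro hv k
    have hw : w ∈ T := hT.2 w a hv
    rw [List.take_append]
    by_cases hk : k ≤ w.length
    · rw [show k - w.length = 0 from by omega]
      simpa using ih hw k
    · rw [List.take_of_length_le (by omega)]
      rcases Nat.lt_or_ge (k - w.length) 1 with h | h
      · omega
      · rw [List.take_of_length_le (by simp; omega)]
        exact hv

/-- children of the root -/
def childSet (T : Finset (List ℕ)) : Finset ℕ :=
  (T.filter (fun v => v.length = 1)).image (fun v => v.headI)

lemma mem_childSet {T : Finset (List ℕ)} {i : ℕ} : i ∈ childSet T ↔ [i] ∈ T := by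
  constructor
  · intro h
    simp only [childSet, Finset.mem_image, Finset.mem_filter] at h
    obtain ⟨v, ⟨hv, hl⟩, hh⟩ := h
    match v, hl with
    | [a], _ => subst hh; exact hv
  · intro h
    simp only [childSet, Finset.mem_image, Finset.mem_filter]
    exact ⟨[i], ⟨h, rfl⟩, rfl⟩

/-- gluing a nonempty nodup list of "parts", each with root in every bag -/
lemma lights (m : ℕ) (part : ℕ → List (Finset (List ℕ))) :
    ∀ cs : List ℕ, cs.Nodup → cs ≠ [] →
    (∀ i ∈ cs, part i ≠ []) →
    (∀ i ∈ cs, Interval (part i)) →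
    (∀ i ∈ cs, Joints m (part i)) →
    (∀ i ∈ cs, ∀ B ∈ part i, [] ∈ B) →
    (∀ i ∈ cs, ∀ B ∈ part i, ∀ v ∈ B, v = [] ∨ ∃ w, v = i :: w) →
    ∃ L : List (Finset (List ℕ)), L ≠ [] ∧ Interval L ∧ Joints m L ∧
      (∀ B ∈ L, [] ∈ B) ∧
      (∀ B ∈ L, ∃ i ∈ cs, B ∈ part i) ∧
      (∀ i ∈ cs, ∀ B ∈ part i, B ∈ L) := by
  intro cs
  induction cs with
  | nil => intro _ h; exact absurd rfl h
  | cons c cs ih =>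
    intro hnd _ hne hint hjnt hroot hshape
    rcases List.eq_nil_or_concat cs with rfl | hcs
    · refine ⟨part c, hne c (by simp), hint c (by simp), hjnt c (by simp),
        hroot c (by simp), fun B hB => ⟨c, by simp, hB⟩, ?_⟩
      intro i hi B hB
      simp only [List.mem_singleton] at hi
      subst hi; exact hB
    · have hcs' : cs ≠ [] := by rcases hcs with ⟨l, a, rfl⟩; simp
      have hnd' : cs.Nodup := (List.nodup_cons.mp hnd).2
      have hcnot : c ∉ cs := (List.nodup_cons.mp hnd).1
      obtain ⟨L', hL'ne, hL'int, hL'jnt, hL'root, hL'bags, hL'all⟩ :=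
        ih hnd' hcs' (fun i hi => hne i (by simp [hi])) (fun i hi => hint i (by simp [hi]))
          (fun i hi => hjnt i (by simp [hi])) (fun i hi => hroot i (by simp [hi]))
          (fun i hi => hshape i (by simp [hi]))
      have hpcne : part c ≠ [] := hne c (by simp)
      have hglue := glue (part c) L' hpcne hL'ne m []
        (hint c (by simp)) hL'int (hjnt c (by simp)) hL'jnt
        (by
          rintro v ⟨B₁, hB₁, hv₁⟩ ⟨B₂, hB₂, hv₂⟩
          rcases hshape c (by simp) B₁ hB₁ v hv₁ with rfl | ⟨w, rfl⟩
          · rfl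
          · obtain ⟨j, hj, hBj⟩ := hL'bags B₂ hB₂
            rcases hshape j (by simp [hj]) B₂ hBj _ hv₂ with h | ⟨w', hw'⟩
            · exact h
            · exfalso
              rw [List.cons.injEq] at hw'
              exact hcnot (hw'.1 ▸ hj))
        (hroot c (by simp) _ (List.getLast_mem hpcne))
        (hL'root _ (List.head_mem hL'ne))
      refine ⟨part c ++ L', by simp [hpcne], hglue.1, hglue.2, ?_, ?_, ?_⟩
      · intro B hB
        rcases List.mem_append.mp hB with h | h
        · exact hroot c (by simp) B h
        · exact hL'root B h
      · intro B hB
        rcases List.mem_append.mp hB with h | h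
        · exact ⟨c, by simp, h⟩
        · obtain ⟨j, hj, hBj⟩ := hL'bags B h
          exact ⟨j, by simp [hj], hBj⟩
      · intro i hi B hB
        rcases List.mem_cons.mp hi with rfl | hi
        · exact List.mem_append.mpr (Or.inl hB)
        · exact List.mem_append.mpr (Or.inr (hL'all i hi B hB))

lemma joints_mono {m m' : ℕ} {L : List (Finset (List ℕ))} (h : Joints m L) (hm : m ≤ m') :
    Joints m' L := fun i hi => le_trans (h i hi) (by omega)

lemma part_props (i : ℕ) (D : List (Finset (List ℕ))) (m' : ℕ)
    (hne : D ≠ []) (hint : Interval D) (hjnt : Joints m' D) :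
    (D.map (fun B => insert [] (B.image (i :: ·)))) ≠ [] ∧
    Interval (D.map (fun B => insert [] (B.image (i :: ·)))) ∧
    Joints (m' + 1) (D.map (fun B => insert [] (B.image (i :: ·)))) ∧
    (∀ B ∈ D.map (fun B => insert [] (B.image (i :: ·))), [] ∈ B) ∧
    (∀ B ∈ D.map (fun B => insert [] (B.image (i :: ·))), ∀ v ∈ B, v = [] ∨ ∃ w, v = i :: w) := by
  refine ⟨by simpa using hne, ?_, ?_, ?_, ?_⟩
  · apply interval_map _ _ _ hint
    intro v
    cases v with
    | nil => exact Or.inl (fun B => Finset.mem_insert_self _ _)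
    | cons a w =>
      by_cases ha : a = i
      · subst ha
        refine Or.inr (Or.inr ⟨w, fun B => ?_⟩)
        simp only [Finset.mem_insert, Finset.mem_image]
        constructor
        · rintro (h | ⟨x, hx, hxe⟩)
          · simp at h
          · rw [List.cons.injEq] at hxe; rwa [← hxe.2]
        · intro hw; exact Or.inr ⟨w, hw, rfl⟩
      · refine Or.inr (Or.inl (fun B => ?_))
        simp only [Finset.mem_insert, Finset.mem_image]
        push_neg
        refine ⟨by simp, ?_⟩
        rintro x hx h
        rw [List.cons.injEq] at h
        exact ha h.1.symm
  · intro idx h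
    simp only [List.length_map] at h
    rw [List.getElem_map, List.getElem_map]
    have hsub : (insert [] ((D[idx]'(by omega)).image (i :: ·)) ∩
        insert [] ((D[idx+1]'h).image (i :: ·)))
        ⊆ insert [] (((D[idx]'(by omega)) ∩ (D[idx+1]'h)).image (i :: ·)) := by
      intro v hv
      simp only [Finset.mem_inter, Finset.mem_insert, Finset.mem_image] at hv ⊢
      rcases hv with ⟨h1 | ⟨x, hx, hxe⟩, h2⟩
      · exact Or.inl h1
      · rcases h2 with h2 | ⟨y, hy, hye⟩
        · exact Or.inl h2
        · refine Or.inr ⟨x, ⟨hx, ?_⟩, hxe⟩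
          have : y = x := List.cons_injective (hye.trans hxe.symm)
          rwa [← this]
    have h1 := Finset.card_le_card hsub
    have h2 := Finset.card_insert_le ([] : List ℕ)
      (((D[idx]'(by omega)) ∩ (D[idx+1]'h)).image (i :: ·))
    have h3 : (((D[idx]'(by omega)) ∩ (D[idx+1]'h)).image (i :: ·)).card ≤
        ((D[idx]'(by omega)) ∩ (D[idx+1]'h)).card := Finset.card_image_le
    have h4 := hjnt idx h
    omega
  · intro B hB
    obtain ⟨B₀, _, rfl⟩ := List.mem_map.mp hB
    exact Finset.mem_insert_self _ _
  · intro B hB v hv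
    obtain ⟨B₀, _, rfl⟩ := List.mem_map.mp hB
    rcases Finset.mem_insert.mp hv with h | h
    · exact Or.inl h
    · obtain ⟨w, _, rfl⟩ := Finset.mem_image.mp h
      exact Or.inr ⟨w, rfl⟩

lemma heavy_props (i : ℕ) (D : List (Finset (List ℕ))) (m' : ℕ)
    (hne : D ≠ []) (hint : Interval D) (hjnt : Joints m' D) :
    (D.map (fun B => B.image (i :: ·))) ≠ [] ∧
    Interval (D.map (fun B => B.image (i :: ·))) ∧
    Joints m' (D.map (fun B => B.image (i :: ·))) ∧
    (∀ B ∈ D.map (fun B => B.image (i :: ·)), ∀ v ∈ B, ∃ w, v = i :: w) := by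
  refine ⟨by simpa using hne, ?_, ?_, ?_⟩
  · apply interval_map _ _ _ hint
    intro v
    cases v with
    | nil =>
      refine Or.inr (Or.inl (fun B => ?_))
      simp only [Finset.mem_image]
      rintro ⟨x, hx, h⟩
      simp at h
    | cons a w =>
      by_cases ha : a = i
      · subst ha
        refine Or.inr (Or.inr ⟨w, fun B => ?_⟩)
        simp only [Finset.mem_image]
        constructor
        · rintro ⟨x, hx, hxe⟩
          rw [List.cons.injEq] at hxe; rwa [← hxe.2]
        · intro hw; exact ⟨w, hw, rfl⟩
      · refine Or.inr (Or.inl (fun B => ?_))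
        simp only [Finset.mem_image]
        rintro ⟨x, hx, h⟩
        rw [List.cons.injEq] at h
        exact ha h.1.symm
  · intro idx h
    simp only [List.length_map] at h
    rw [List.getElem_map, List.getElem_map]
    have he : (Finset.image (fun x => i :: x) (D[idx]'(by omega)) ∩ Finset.image (fun x => i :: x) (D[idx+1]'h)) = ((D[idx]'(by omega)) ∩ (D[idx+1]'h)).image (fun x => i :: x) := (Finset.image_inter _ _ List.cons_injective).symm
    rw [he, Finset.card_image_of_injective _ List.cons_injective]
    exact hjnt idx h
  · intro B hB v hv
    obtain ⟨B₀, _, rfl⟩ := List.mem_map.mp hB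
    obtain ⟨w, _, rfl⟩ := Finset.mem_image.mp hv
    exact ⟨w, rfl⟩

lemma key : ∀ (N : ℕ) (T : Finset (List ℕ)), T.card ≤ N → IsTreeSet T →
    ∀ br : List ℕ → ℕ, IsBranchingLabelling T br → ∃ L, PD T (br []) L := by
  intro N
  induction N with
  | zero =>
    intro T hc hT br hbr
    exact absurd (Finset.card_pos.mpr ⟨[], hT.1⟩) (by omega)
  | succ N ih =>
    intro T hc hT br hbr
    by_cases hchild : ∃ i : ℕ, [i] ∈ T
    case neg =>
      have hleaf : ∀ i : ℕ, [] ++ [i] ∉ T := fun i hi => hchild ⟨i, by simpa using hi⟩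
      have honly : ∀ v ∈ T, v = [] := by
        intro v hv
        cases v with
        | nil => rfl
        | cons a t =>
          exfalso
          have h1 : (a :: t).take 1 ∈ T := mem_take hT _ hv 1
          simp only [List.take_succ_cons, List.take_zero] at h1
          exact hleaf a h1
      refine ⟨[{[]}], ?_, ?_, ?_, ?_, interval_singleton _, ?_, joints_singleton _ _, ?_⟩
      · simp
      · intro B hB v hv
        simp only [List.mem_singleton] at hB
        subst hB
        simp only [Finset.mem_singleton] at hv
        subst hv; exact hT.1
      · intro v hv
        exact ⟨{[]}, by simp, by simp [honly v hv]⟩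
      · intro v j hvj
        exact absurd (honly _ hvj) (by simp)
      · intro B hB
        simp only [List.mem_singleton] at hB
        subst hB; simp
      · intro h; simp
    case pos =>
      obtain ⟨M, hM1, hM2, hM3⟩ := hbr.2 [] hT.1 (by simpa using hchild)
      simp only [List.nil_append] at hM1 hM2 hM3
      have hIH : ∀ i : ℕ, ∃ L, [i] ∈ T → PD (sub T i) (br [i]) L := by
        intro i
        by_cases hi : [i] ∈ T
        · obtain ⟨L, hL⟩ := ih (sub T i) (by have := sub_card hT.1 i; omega)
            (sub_tree hT hi) _ (sub_br hbr i)
          exact ⟨L, fun _ => hL⟩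
        · exact ⟨[], fun h => absurd h hi⟩
      choose D hD using hIH
      have hhead : ∀ (a : ℕ) (w : List ℕ), a :: w ∈ T → [a] ∈ T := by
        intro a w hv
        have h1 := mem_take hT _ hv 1
        simpa using h1
      rcases hM3 with ⟨_, hrootbr⟩ | ⟨hcard1, hrootbr⟩
      · -- case A : br [] = M + 1
        set part : ℕ → List (Finset (List ℕ)) :=
          fun i => (D i).map (fun B => insert [] (B.image (i :: ·))) with hpart
        set cs := (childSet T).toList with hcs
        have hmemcs : ∀ i, i ∈ cs ↔ [i] ∈ T := by
          intro i; rw [hcs, Finset.mem_toList, mem_childSet]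
        have hcsne : cs ≠ [] := by
          obtain ⟨i, hi⟩ := hchild
          intro h
          rw [← hmemcs i] at hi
          simp [h] at hi
        have hpd : ∀ i ∈ cs, PD (sub T i) M (D i) := fun i hi =>
          (hD i ((hmemcs i).mp hi)).mono (hM1 i ((hmemcs i).mp hi))
        have hpp : ∀ i ∈ cs, part i ≠ [] ∧ Interval (part i) ∧ Joints (M + 1) (part i) ∧
            (∀ B ∈ part i, [] ∈ B) ∧ (∀ B ∈ part i, ∀ v ∈ B, v = [] ∨ ∃ w, v = i :: w) :=
          fun i hi => part_props i (D i) M (hpd i hi).1 (hpd i hi).2.2.2.2.1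
            (hpd i hi).2.2.2.2.2.2.1
        obtain ⟨L, hLne, hLint, hLjnt, hLroot, hLbags, hLall⟩ :=
          lights (M + 1) part cs (Finset.nodup_toList _) hcsne
            (fun i hi => (hpp i hi).1) (fun i hi => (hpp i hi).2.1)
            (fun i hi => (hpp i hi).2.2.1) (fun i hi => (hpp i hi).2.2.2.1)
            (fun i hi => (hpp i hi).2.2.2.2)
        rw [hrootbr]
        refine ⟨L, hLne, ?_, ?_, ?_, hLint, ?_, hLjnt, ?_⟩
        · intro B hB v hv
          obtain ⟨i, hi, hBi⟩ := hLbags B hB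
          obtain ⟨B₀, hB₀, rfl⟩ := List.mem_map.mp hBi
          rcases Finset.mem_insert.mp hv with rfl | hv
          · exact hT.1
          · obtain ⟨w, hw, rfl⟩ := Finset.mem_image.mp hv
            exact mem_sub.mp ((hpd i hi).2.1 _ hB₀ w hw)
        · intro v hv
          cases v with
          | nil =>
            have hhd := List.head_mem hLne
            exact ⟨_, hhd, hLroot _ hhd⟩
          | cons a w =>
            have ha : a ∈ cs := (hmemcs a).mpr (hhead a w hv)
            obtain ⟨B₀, hB₀, hw⟩ := (hpd a ha).2.2.1 w (mem_sub.mpr hv)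
            refine ⟨insert [] (B₀.image (a :: ·)),
              hLall a ha _ (List.mem_map_of_mem hB₀), ?_⟩
            exact Finset.mem_insert.mpr (Or.inr (Finset.mem_image_of_mem _ hw))
        · intro v j hvj
          cases v with
          | nil =>
            have hjT : [j] ∈ T := hvj
            have hj : j ∈ cs := (hmemcs j).mpr hjT
            have hDne := (hpd j hj).1
            have hlast : [] ∈ (D j).getLast hDne := (hpd j hj).2.2.2.2.2.2.2 hDne
            refine ⟨insert [] (((D j).getLast hDne).image (j :: ·)),
              hLall j hj _ (List.mem_map_of_mem (List.getLast_mem hDne)), ?_, ?_⟩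
            · exact Finset.mem_insert_self _ _
            · exact Finset.mem_insert.mpr (Or.inr (Finset.mem_image_of_mem _ hlast))
          | cons a w =>
            have haw : a :: (w ++ [j]) ∈ T := hvj
            have ha : a ∈ cs := (hmemcs a).mpr (hhead a _ haw)
            obtain ⟨B₀, hB₀, hw1, hw2⟩ := (hpd a ha).2.2.2.1 w j (mem_sub.mpr haw)
            exact ⟨insert [] (B₀.image (a :: ·)), hLall a ha _ (List.mem_map_of_mem hB₀),
              Finset.mem_insert.mpr (Or.inr (Finset.mem_image_of_mem _ hw1)),
              Finset.mem_insert.mpr (Or.inr (Finset.mem_image_of_mem _ hw2))⟩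
        · intro B hB
          obtain ⟨i, hi, hBi⟩ := hLbags B hB
          obtain ⟨B₀, hB₀, rfl⟩ := List.mem_map.mp hBi
          have h1 := Finset.card_insert_le ([] : List ℕ) (B₀.image (i :: ·))
          have h2 : (B₀.image (i :: ·)).card ≤ B₀.card := Finset.card_image_le
          have h3 := (hpd i hi).2.2.2.2.2.1 B₀ hB₀
          omega
        · intro h
          exact hLroot _ (List.getLast_mem h)
      · -- case B : br [] = M
        obtain ⟨i₀, hi₀T, hi₀M⟩ := hM2
        have huniq : ∀ i, [i] ∈ T → br [i] = M → i = i₀ := by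
          intro i hiT hiM
          by_contra hne
          have hsub2 : ({i, i₀} : Set ℕ) ⊆ {k : ℕ | [k] ∈ T ∧ br [k] = M} := by
            intro x hx
            rcases hx with rfl | hx
            · exact ⟨hiT, hiM⟩
            · rw [Set.mem_singleton_iff] at hx
              subst hx; exact ⟨hi₀T, hi₀M⟩
          have hfin : {k : ℕ | [k] ∈ T ∧ br [k] = M}.Finite := by
            apply (childSet T).finite_toSet.subset
            intro k hk
            exact Finset.mem_coe.mpr (mem_childSet.mpr hk.1)
          have h2 := Set.ncard_le_ncard hsub2 hfin
          rw [Set.ncard_pair hne] at h2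
          omega
        have hpdh : PD (sub T i₀) M (D i₀) := by
          have h := hD i₀ hi₀T; rwa [hi₀M] at h
        set heavy := (D i₀).map (fun B => B.image (i₀ :: ·)) with hheavy
        obtain ⟨hhne, hhint, hhjnt, hhshape⟩ :=
          heavy_props i₀ (D i₀) M hpdh.1 hpdh.2.2.2.2.1 hpdh.2.2.2.2.2.2.1
        set J : Finset (List ℕ) := {[i₀], []} with hJdef
        have hJ0 : ([] : List ℕ) ∈ J := by simp [hJdef]
        have hJ1 : [i₀] ∈ J := by simp [hJdef]
        have hJmem : ∀ v ∈ J, v = [i₀] ∨ v = [] := by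
          intro v hv; simpa [hJdef] using hv
        have hJcard : J.card ≤ 2 := by
          apply le_trans (Finset.card_insert_le _ _); simp
        set part : ℕ → List (Finset (List ℕ)) :=
          fun i => (D i).map (fun B => insert [] (B.image (i :: ·))) with hpart
        set cs := ((childSet T).erase i₀).toList with hcs
        have hmemcs : ∀ i, i ∈ cs ↔ ([i] ∈ T ∧ i ≠ i₀) := by
          intro i
          rw [hcs, Finset.mem_toList, Finset.mem_erase, mem_childSet]
          tauto
        have hlightbr : ∀ i ∈ cs, br [i] + 1 ≤ M := by
          intro i hi
          obtain ⟨hiT, hine⟩ := (hmemcs i).mp hi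
          have h1 := hM1 i hiT
          rcases Nat.lt_or_ge (br [i]) M with h | h
          · omega
          · exact absurd (huniq i hiT (by omega)) hine
        have hpd : ∀ i ∈ cs, PD (sub T i) (M - 1) (D i) := by
          intro i hi
          obtain ⟨hiT, _⟩ := (hmemcs i).mp hi
          exact (hD i hiT).mono (by have := hlightbr i hi; omega)
        have hpp : ∀ i ∈ cs, part i ≠ [] ∧ Interval (part i) ∧
            Joints (M - 1 + 1) (part i) ∧
            (∀ B ∈ part i, [] ∈ B) ∧ (∀ B ∈ part i, ∀ v ∈ B, v = [] ∨ ∃ w, v = i :: w) :=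
          fun i hi => part_props i (D i) (M - 1) (hpd i hi).1 (hpd i hi).2.2.2.2.1
            (hpd i hi).2.2.2.2.2.2.1
        have htail : ∃ (tail : List (Finset (List ℕ))) (htne : tail ≠ []),
            Interval tail ∧ Joints M tail ∧
            (∀ B ∈ tail, ∀ v ∈ B, v ∈ T) ∧
            (∀ B ∈ tail, B.card ≤ M + 2) ∧
            (∀ v, InBags tail v → v = [] ∨ v = [i₀] ∨ ∃ j w, j ≠ i₀ ∧ v = j :: w) ∧
            ([i₀] ∈ tail.head htne) ∧ ([] ∈ tail.getLast htne) ∧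
            (J ∈ tail) ∧
            (∀ j ∈ cs, ∀ B ∈ part j, B ∈ tail) := by
          rcases List.eq_nil_or_concat cs with hcse | hcsne'
          · refine ⟨[J], by simp, interval_singleton _, joints_singleton _ _, ?_, ?_, ?_,
              by simpa using hJ1, by simpa using hJ0, by simp, ?_⟩
            · intro B hB v hv
              simp only [List.mem_singleton] at hB
              subst hB
              rcases hJmem v hv with rfl | rfl
              exacts [hi₀T, hT.1]
            · intro B hB
              simp only [List.mem_singleton] at hB
              subst hB; omega
            · rintro v ⟨B, hB, hv⟩
              simp only [List.mem_singleton] at hB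
              subst hB
              rcases hJmem v hv with rfl | rfl
              · exact Or.inr (Or.inl rfl)
              · exact Or.inl rfl
            · intro j hj
              rw [hcse] at hj
              simp at hj
          · have hcsne : cs ≠ [] := by
              obtain ⟨l, a, h⟩ := hcsne'
              intro h0
              rw [h0] at h
              simpa using h.symm
            have hM1' : 1 ≤ M := by
              obtain ⟨i, hi⟩ := List.exists_mem_of_ne_nil cs hcsne
              have := hlightbr i hi; omega
            have hMeq : M - 1 + 1 = M := by omega
            obtain ⟨Ll, hLlne, hLlint, hLljnt, hLlroot, hLlbags, hLlall⟩ :=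
              lights (M - 1 + 1) part cs (Finset.nodup_toList _) hcsne
                (fun i hi => (hpp i hi).1) (fun i hi => (hpp i hi).2.1)
                (fun i hi => (hpp i hi).2.2.1) (fun i hi => (hpp i hi).2.2.2.1)
                (fun i hi => (hpp i hi).2.2.2.2)
            rw [hMeq] at hLljnt
            have hg1 := glue [J] Ll (by simp) hLlne M []
              (interval_singleton _) hLlint (joints_singleton _ _) hLljnt
              (by rintro v ⟨B, hB, hv⟩ ⟨B', hB', hv'⟩
                  simp only [List.mem_singleton] at hB
                  subst hB
                  rcases hJmem v hv with rfl | rfl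
                  · exfalso
                    obtain ⟨j, hj, hBj⟩ := hLlbags B' hB'
                    rcases (hpp j hj).2.2.2.2 B' hBj _ hv' with h | ⟨w, hw⟩
                    · simp at h
                    · rw [List.cons.injEq] at hw
                      exact ((hmemcs j).mp hj).2 hw.1.symm
                  · rfl)
              (by simpa using hJ0)
              (hLlroot _ (List.head_mem hLlne))
            refine ⟨J :: Ll, by simp, hg1.1, hg1.2, ?_, ?_, ?_, by simp only [List.head_cons]; exact hJ1, ?_, by simp, ?_⟩
            · intro B hB v hv
              rcases List.mem_cons.mp hB with rfl | hB
              · rcases hJmem v hv with rfl | rfl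
                exacts [hi₀T, hT.1]
              · obtain ⟨j, hj, hBj⟩ := hLlbags B hB
                obtain ⟨B₀, hB₀, rfl⟩ := List.mem_map.mp hBj
                rcases Finset.mem_insert.mp hv with rfl | hv
                · exact hT.1
                · obtain ⟨w, hw, rfl⟩ := Finset.mem_image.mp hv
                  exact mem_sub.mp ((hpd j hj).2.1 _ hB₀ w hw)
            · intro B hB
              rcases List.mem_cons.mp hB with rfl | hB
              · omega
              · obtain ⟨j, hj, hBj⟩ := hLlbags B hB
                obtain ⟨B₀, hB₀, rfl⟩ := List.mem_map.mp hBj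
                have h1 := Finset.card_insert_le ([] : List ℕ) (B₀.image (j :: ·))
                have h2 : (B₀.image (j :: ·)).card ≤ B₀.card := Finset.card_image_le
                have h3 := (hpd j hj).2.2.2.2.2.1 B₀ hB₀
                omega
            · rintro v ⟨B, hB, hv⟩
              rcases List.mem_cons.mp hB with rfl | hB
              · rcases hJmem v hv with rfl | rfl
                · exact Or.inr (Or.inl rfl)
                · exact Or.inl rfl
              · obtain ⟨j, hj, hBj⟩ := hLlbags B hB
                rcases (hpp j hj).2.2.2.2 B hBj v hv with rfl | ⟨w, rfl⟩
                · exact Or.inl rfl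
                · exact Or.inr (Or.inr ⟨j, w, ((hmemcs j).mp hj).2, rfl⟩)
            · rw [List.getLast_cons hLlne]
              exact hLlroot _ (List.getLast_mem hLlne)
            · intro j hj B hB
              exact List.mem_cons_of_mem _ (hLlall j hj B hB)
        obtain ⟨tail, htne, htint, htjnt, htsubT, htcard, htshape, hthead, htlast, htJ,
          htpart⟩ := htail
        have hheavylast : [i₀] ∈ heavy.getLast hhne := by
          have hDne := hpdh.1
          have hlast0 : [] ∈ (D i₀).getLast hDne := hpdh.2.2.2.2.2.2.2 hDne
          rw [List.getLast_eq_getElem]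
          simp only [hheavy, List.getElem_map, List.length_map]
          refine Finset.mem_image_of_mem _ ?_
          rw [← List.getLast_eq_getElem]
          exact hlast0
        have hgl := glue heavy tail hhne htne M [i₀] hhint htint hhjnt htjnt
          (by rintro v ⟨B₁, hB₁, hv₁⟩ hv₂
              obtain ⟨w, rfl⟩ := hhshape B₁ hB₁ v hv₁
              rcases htshape _ hv₂ with h | h | ⟨j, w', hj, he⟩
              · simp at h
              · exact h
              · rw [List.cons.injEq] at he
                exact absurd he.1.symm hj)
          hheavylast hthead
        rw [hrootbr]
        have hLne : heavy ++ tail ≠ [] := by simp [hhne, htne]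
        refine ⟨heavy ++ tail, hLne, ?_, ?_, ?_, hgl.1, ?_, hgl.2, ?_⟩
        · intro B hB v hv
          rcases List.mem_append.mp hB with hB | hB
          · obtain ⟨B₀, hB₀, rfl⟩ := List.mem_map.mp hB
            obtain ⟨w, hw, rfl⟩ := Finset.mem_image.mp hv
            exact mem_sub.mp (hpdh.2.1 _ hB₀ w hw)
          · exact htsubT B hB v hv
        · intro v hv
          cases v with
          | nil => exact ⟨J, List.mem_append.mpr (Or.inr htJ), hJ0⟩
          | cons a w =>
            by_cases ha : a = i₀
            · subst ha
              obtain ⟨B₀, hB₀, hw⟩ := hpdh.2.2.1 w (mem_sub.mpr hv)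
              exact ⟨B₀.image (a :: ·),
                List.mem_append.mpr (Or.inl (List.mem_map_of_mem hB₀)),
                Finset.mem_image_of_mem _ hw⟩
            · have hacs : a ∈ cs := (hmemcs a).mpr ⟨hhead a w hv, ha⟩
              obtain ⟨B₀, hB₀, hw⟩ := (hpd a hacs).2.2.1 w (mem_sub.mpr hv)
              refine ⟨insert [] (B₀.image (a :: ·)),
                List.mem_append.mpr (Or.inr (htpart a hacs _ (List.mem_map_of_mem hB₀))), ?_⟩
              exact Finset.mem_insert.mpr (Or.inr (Finset.mem_image_of_mem _ hw))
        · intro v j hvj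
          cases v with
          | nil =>
            have hjT : [j] ∈ T := hvj
            by_cases hj : j = i₀
            · subst hj
              exact ⟨J, List.mem_append.mpr (Or.inr htJ), hJ0, hJ1⟩
            · have hjcs : j ∈ cs := (hmemcs j).mpr ⟨hjT, hj⟩
              have hDne := (hpd j hjcs).1
              have hlast : [] ∈ (D j).getLast hDne := (hpd j hjcs).2.2.2.2.2.2.2 hDne
              refine ⟨insert [] (((D j).getLast hDne).image (j :: ·)),
                List.mem_append.mpr (Or.inr (htpart j hjcs _
                  (List.mem_map_of_mem (List.getLast_mem hDne)))), ?_, ?_⟩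
              · exact Finset.mem_insert_self _ _
              · exact Finset.mem_insert.mpr (Or.inr (Finset.mem_image_of_mem _ hlast))
          | cons a w =>
            have haw : a :: (w ++ [j]) ∈ T := hvj
            by_cases ha : a = i₀
            · subst ha
              obtain ⟨B₀, hB₀, hw1, hw2⟩ := hpdh.2.2.2.1 w j (mem_sub.mpr haw)
              exact ⟨B₀.image (a :: ·),
                List.mem_append.mpr (Or.inl (List.mem_map_of_mem hB₀)),
                Finset.mem_image_of_mem _ hw1, Finset.mem_image_of_mem _ hw2⟩
            · have hacs : a ∈ cs := (hmemcs a).mpr ⟨hhead a _ haw, ha⟩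
              obtain ⟨B₀, hB₀, hw1, hw2⟩ := (hpd a hacs).2.2.2.1 w j (mem_sub.mpr haw)
              exact ⟨insert [] (B₀.image (a :: ·)),
                List.mem_append.mpr (Or.inr (htpart a hacs _ (List.mem_map_of_mem hB₀))),
                Finset.mem_insert.mpr (Or.inr (Finset.mem_image_of_mem _ hw1)),
                Finset.mem_insert.mpr (Or.inr (Finset.mem_image_of_mem _ hw2))⟩
        · intro B hB
          rcases List.mem_append.mp hB with hB | hB
          · obtain ⟨B₀, hB₀, rfl⟩ := List.mem_map.mp hB
            have h2 : (B₀.image (i₀ :: ·)).card ≤ B₀.card := Finset.card_image_le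
            have h3 := hpdh.2.2.2.2.2.1 B₀ hB₀
            omega
          · exact htcard B hB
        · intro h
          rw [List.getLast_append_of_ne_nil h htne]
          exact htlast

end PDProof

/-- Every rooted tree `T` with branching number `m` (at the root) admits a path
decomposition in which every bag has size at most `m + 2`, every intersection
of consecutive bags has size at most `m + 1`, and the root belongs to the last
bag. -/
theorem path_decomposition_of_branching (T : Finset (List ℕ)) (hT : IsTreeSet T)
    (br : List ℕ → ℕ) (hbr : IsBranchingLabelling T br) (m : ℕ) (hm : br [] = m) :
    ∃ (n : ℕ) (B : Fin (n + 1) → Finset (List ℕ)),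
      (∀ i, ∀ v ∈ B i, v ∈ T) ∧
      (∀ v ∈ T, ∃ i, v ∈ B i) ∧
      (∀ (v : List ℕ) (j : ℕ), v ++ [j] ∈ T → ∃ i, v ∈ B i ∧ v ++ [j] ∈ B i) ∧
      (∀ i j l : Fin (n + 1), i ≤ j → j ≤ l → ∀ v, v ∈ B i → v ∈ B l → v ∈ B j) ∧
      (∀ i, (B i).card ≤ m + 2) ∧
      (∀ i : Fin n, (B i.castSucc ∩ B i.succ).card ≤ m + 1) ∧
      [] ∈ B (Fin.last n) := by
  obtain ⟨L, hL⟩ := PDProof.key T.card T le_rfl hT br hbr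
  rw [hm] at hL
  obtain ⟨hne, h2, h3, h4, hint, h6, h7, h8⟩ := hL
  have hlen : 0 < L.length := List.length_pos_iff.mpr hne
  refine ⟨L.length - 1, fun i => L[i.val]'(by have := i.isLt; omega), ?_, ?_, ?_, ?_, ?_, ?_, ?_⟩
  · intro i v hv
    exact h2 _ (List.getElem_mem _) v hv
  · intro v hv
    obtain ⟨B, hB, hvB⟩ := h3 v hv
    obtain ⟨idx, hidx, hEq⟩ := List.mem_iff_getElem.mp hB
    rw [← hEq] at hvB
    exact ⟨⟨idx, by omega⟩, hvB⟩
  · intro v j hvj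
    obtain ⟨B, hB, hv1, hv2⟩ := h4 v j hvj
    obtain ⟨idx, hidx, hEq⟩ := List.mem_iff_getElem.mp hB
    rw [← hEq] at hv1 hv2
    exact ⟨⟨idx, by omega⟩, hv1, hv2⟩
  · intro i j l hij hjl v hvi hvl
    exact hint i.val j.val l.val (by have := i.isLt; omega) (by have := j.isLt; omega)
      (by have := l.isLt; omega) hij hjl v hvi hvl
  · intro i
    exact h6 _ (List.getElem_mem _)
  · intro i
    exact h7 i.val (by have := i.isLt; omega)
  · have h := h8 hne
    rw [List.getLast_eq_getElem] at h
    exact h
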